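/- Let δ > 0 and let a, b, H be continuous on (-1,-1+δ] with a(x) > 0 for all x ∈ (-1,-1+δ), and assume ∫_{x}^{-1+δ} ds/a(s) → +∞ as x → -1⁺. Assume b⁻ and H⁺ are bounded on (-1,-1+δ). Suppose g ∈ C¹((-1,-1+δ]) satisfies the Riccati-type equation on (-1,-1+δ). Then g(x) ≤ max{ 4·sup_{(-1,-1+δ)} b⁻, √(8·sup_{(-1,-1+δ)} H⁺) } for all x ∈ (-1,-1+δ). -/

import Mathlib

open Set Filter Topology

/-- Upper bound for C¹ solutions of the Riccati-type equation when a > 0 and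
∫ₓ^{-1+δ} ds/a(s) → +∞ as x → -1⁺. -/
theorem stmt13 (δ : ℝ) (hδ : 0 < δ) (a b H g g' : ℝ → ℝ)
    (ha : ContinuousOn a (Ioc (-1 : ℝ) (-1 + δ)))
    (hb : ContinuousOn b (Ioc (-1 : ℝ) (-1 + δ)))
    (hH : ContinuousOn H (Ioc (-1 : ℝ) (-1 + δ)))
    (hapos : ∀ x ∈ Ioo (-1 : ℝ) (-1 + δ), 0 < a x)
    (haInt : Tendsto (fun x => ∫ s in x..(-1 + δ), 1 / a s) (𝓝[>] (-1)) atTop)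
    (hbmBdd : BddAbove ((fun x => max (-b x) 0) '' Ioo (-1 : ℝ) (-1 + δ)))
    (hHpBdd : BddAbove ((fun x => max (H x) 0) '' Ioo (-1 : ℝ) (-1 + δ)))
    (hg : ∀ x ∈ Ioc (-1 : ℝ) (-1 + δ),
      HasDerivWithinAt g (g' x) (Ioc (-1 : ℝ) (-1 + δ)) x)
    (hg' : ContinuousOn g' (Ioc (-1 : ℝ) (-1 + δ)))
    (heq : ∀ x ∈ Ioo (-1 : ℝ) (-1 + δ),
      a x * g' x + b x * g x + (1 / 2) * (g x) ^ 2 = H x) :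
    ∀ x ∈ Ioo (-1 : ℝ) (-1 + δ),
      g x ≤ max (4 * sSup ((fun x => max (-b x) 0) '' Ioo (-1 : ℝ) (-1 + δ)))
        (Real.sqrt (8 * sSup ((fun x => max (H x) 0) '' Ioo (-1 : ℝ) (-1 + δ)))) := by
  set Bm := sSup ((fun x => max (-b x) 0) '' Ioo (-1 : ℝ) (-1 + δ)) with hBmdef
  set Hp := sSup ((fun x => max (H x) 0) '' Ioo (-1 : ℝ) (-1 + δ)) with hHpdef
  set M := max (4 * Bm) (Real.sqrt (8 * Hp)) with hMdef
  intro x₀ hx₀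
  by_contra hcon
  push_neg at hcon
  have hJne : (Ioo (-1 : ℝ) (-1 + δ)).Nonempty := ⟨-1 + δ / 2, by constructor <;> linarith⟩
  obtain ⟨y₀, hy₀⟩ := hJne
  have hBm0 : 0 ≤ Bm :=
    le_trans (le_max_right (-b y₀) 0) (le_csSup hbmBdd (mem_image_of_mem _ hy₀))
  have hHp0 : 0 ≤ Hp :=
    le_trans (le_max_right (H y₀) 0) (le_csSup hHpBdd (mem_image_of_mem _ hy₀))
  have hM0 : 0 ≤ M := le_trans (by linarith) (le_max_left _ _)
  have hM4 : 4 * Bm ≤ M := le_max_left _ _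
  have hM2 : 8 * Hp ≤ M ^ 2 := by
    have h1 : Real.sqrt (8 * Hp) ≤ M := le_max_right _ _
    have h2 : Real.sqrt (8 * Hp) ^ 2 = 8 * Hp := Real.sq_sqrt (by linarith)
    nlinarith [Real.sqrt_nonneg (8 * Hp)]
  have hble : ∀ x ∈ Ioo (-1 : ℝ) (-1 + δ), -b x ≤ Bm := fun x hx =>
    le_trans (le_max_left _ _) (le_csSup hbmBdd (mem_image_of_mem _ hx))
  have hHle : ∀ x ∈ Ioo (-1 : ℝ) (-1 + δ), H x ≤ Hp := fun x hx =>
    le_trans (le_max_left _ _) (le_csSup hHpBdd (mem_image_of_mem _ hx))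
  have gcont : ContinuousOn g (Ioc (-1 : ℝ) (-1 + δ)) := fun x hx =>
    (hg x hx).continuousWithinAt
  -- key pointwise estimate where g > M
  have keyA : ∀ x ∈ Ioo (-1 : ℝ) (-1 + δ), M < g x → a x * g' x ≤ -(g x) ^ 2 / 8 := by
    intro x hx hgx
    have h1 := hHle x hx
    have h2 := hble x hx
    have heqx := heq x hx
    have hgpos : 0 < g x := lt_of_le_of_lt hM0 hgx
    nlinarith [mul_le_mul_of_nonneg_right h2 hgpos.le,
      mul_le_mul_of_nonneg_right (le_of_lt hgx) hgpos.le,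
      mul_self_le_mul_self hM0 hgx.le]
  -- g > M on (-1, x₀]
  have keyB : ∀ x ∈ Ioc (-1 : ℝ) x₀, M < g x := by
    intro x hx
    by_contra hle
    push_neg at hle
    have hxI : x ∈ Ioc (-1 : ℝ) (-1 + δ) := ⟨hx.1, hx.2.trans hx₀.2.le⟩
    have hxlt : x < x₀ := lt_of_le_of_ne hx.2 (fun h => by rw [h] at hle; linarith)
    set S : Set ℝ := Icc x x₀ ∩ g ⁻¹' Iic M with hSdef
    have hIccsub : Icc x x₀ ⊆ Ioc (-1 : ℝ) (-1 + δ) := fun y hy =>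
      ⟨lt_of_lt_of_le hx.1 hy.1, hy.2.trans hx₀.2.le⟩
    have hSclosed : IsClosed S :=
      (gcont.mono hIccsub).preimage_isClosed_of_isClosed isClosed_Icc isClosed_Iic
    have hSne : S.Nonempty := ⟨x, ⟨le_refl _, hxlt.le⟩, hle⟩
    have hSbdd : BddAbove S := ⟨x₀, fun y hy => hy.1.2⟩
    set t := sSup S with htdef
    have htS : t ∈ S := hSclosed.csSup_mem hSne hSbdd
    have htM : g t ≤ M := htS.2
    have htlt : t < x₀ := lt_of_le_of_ne htS.1.2 (fun h => by rw [h] at htM; linarith)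
    have hgt : ∀ y ∈ Ioc t x₀, M < g y := by
      intro y hy
      by_contra hyle
      push_neg at hyle
      have : y ∈ S := ⟨⟨htS.1.1.trans hy.1.le, hy.2⟩, hyle⟩
      exact absurd (le_csSup hSbdd this) (not_le.mpr hy.1)
    have hsub2 : Icc t x₀ ⊆ Ioc (-1 : ℝ) (-1 + δ) := fun y hy =>
      hIccsub ⟨htS.1.1.trans hy.1, hy.2⟩
    have hanti : StrictAntiOn g (Icc t x₀) := by
      apply strictAntiOn_of_deriv_neg (convex_Icc t x₀) (gcont.mono hsub2)
      intro y hy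
      rw [interior_Icc] at hy
      have hyJ : y ∈ Ioo (-1 : ℝ) (-1 + δ) :=
        ⟨lt_of_lt_of_le hx.1 (htS.1.1.trans hy.1.le), lt_trans hy.2 hx₀.2⟩
      have hyI : y ∈ Ioc (-1 : ℝ) (-1 + δ) := Ioo_subset_Ioc_self hyJ
      have hdy : HasDerivAt g (g' y) y :=
        (hg y hyI).hasDerivAt (Ioc_mem_nhds hyJ.1 hyJ.2)
      rw [hdy.deriv]
      have hMgy : M < g y := hgt y ⟨hy.1, hy.2.le⟩
      have hay : 0 < a y := hapos y hyJ
      have hgy : 0 < g y := lt_of_le_of_lt hM0 hMgy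
      have := keyA y hyJ hMgy
      nlinarith
    have : g x₀ < g t := hanti ⟨le_refl _, htlt.le⟩ ⟨htlt.le, le_refl _⟩ htlt
    have hMx₀ := hcon
    linarith
  -- integrability of 1/a on [x₀, -1+δ]
  have h1acont : ContinuousOn (fun s => 1 / a s) (Ioo (-1 : ℝ) (-1 + δ)) := by
    apply ContinuousOn.div continuousOn_const (ha.mono Ioo_subset_Ioc_self)
    exact fun y hy => (hapos y hy).ne'
  have hmem : Ioo (-1 : ℝ) x₀ ∈ 𝓝[>] (-1 : ℝ) :=
    Ioo_mem_nhdsGT_of_mem ⟨le_refl _, hx₀.1⟩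
  obtain ⟨x₂, hx₂ge, hx₂⟩ :=
    ((haInt.eventually_ge_atTop 1).and (eventually_of_mem hmem fun y hy => hy)).exists
  have hIntx₂ : IntervalIntegrable (fun s => 1 / a s) MeasureTheory.volume x₂ (-1 + δ) := by
    by_contra hni
    rw [intervalIntegral.integral_undef hni] at hx₂ge
    linarith
  have hIntx₀ : IntervalIntegrable (fun s => 1 / a s) MeasureTheory.volume x₀ (-1 + δ) := by
    apply hIntx₂.mono_set
    rw [uIcc_of_le (le_of_lt (hx₂.2.trans hx₀.2)), uIcc_of_le hx₀.2.le]
    exact Icc_subset_Icc hx₂.2.le (le_refl _)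
  set K := ∫ s in x₀..(-1 + δ), 1 / a s with hKdef
  have hgx₀pos : 0 < g x₀ := lt_of_le_of_lt hM0 hcon
  -- choose x close to -1 with large integral
  obtain ⟨x, hxge, hx⟩ :=
    ((haInt.eventually_ge_atTop (8 / g x₀ + K + 1)).and
      (eventually_of_mem hmem fun y hy => hy)).exists
  have hxJ : x ∈ Ioo (-1 : ℝ) (-1 + δ) := ⟨hx.1, hx.2.trans hx₀.2⟩
  have hIccJ : Icc x x₀ ⊆ Ioo (-1 : ℝ) (-1 + δ) := fun y hy =>
    ⟨lt_of_lt_of_le hx.1 hy.1, lt_of_le_of_lt hy.2 hx₀.2⟩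
  have hgpos : ∀ y ∈ Icc x x₀, 0 < g y := fun y hy =>
    lt_of_le_of_lt hM0 (keyB y ⟨lt_of_lt_of_le hx.1 hy.1, hy.2⟩)
  have hIntxx₀ : IntervalIntegrable (fun s => 1 / a s) MeasureTheory.volume x x₀ := by
    apply ContinuousOn.intervalIntegrable
    apply h1acont.mono
    rw [uIcc_of_le hx.2.le]
    exact hIccJ
  -- the comparison function
  set F : ℝ → ℝ := fun y => (g y)⁻¹ - (1 / 8) * ∫ s in x..y, 1 / a s with hFdef
  have hdF : ∀ y ∈ Ioo x x₀,
      HasDerivAt F (-(g' y) / g y ^ 2 - (1 / 8) * (1 / a y)) y := by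
    intro y hy
    have hyJ : y ∈ Ioo (-1 : ℝ) (-1 + δ) := hIccJ ⟨hy.1.le, hy.2.le⟩
    have hyI : y ∈ Ioc (-1 : ℝ) (-1 + δ) := Ioo_subset_Ioc_self hyJ
    have hgy : 0 < g y := hgpos y ⟨hy.1.le, hy.2.le⟩
    have hdg : HasDerivAt g (g' y) y :=
      (hg y hyI).hasDerivAt (Ioc_mem_nhds hyJ.1 hyJ.2)
    have hdint : HasDerivAt (fun u => ∫ s in x..u, 1 / a s) (1 / a y) y := by
      apply intervalIntegral.integral_hasDerivAt_right
      · apply ContinuousOn.intervalIntegrable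
        apply h1acont.mono
        rw [uIcc_of_le hy.1.le]
        exact (Icc_subset_Icc_right hy.2.le).trans hIccJ
      · exact ContinuousOn.stronglyMeasurableAtFilter isOpen_Ioo h1acont y hyJ
      · exact h1acont.continuousAt (isOpen_Ioo.mem_nhds hyJ)
    exact (hdg.inv hgy.ne').sub (hdint.const_mul (1 / 8))
  have hFmono : MonotoneOn F (Icc x x₀) := by
    apply monotoneOn_of_deriv_nonneg (convex_Icc x x₀)
    · apply ContinuousOn.sub
      · exact ((gcont.mono (hIccJ.trans Ioo_subset_Ioc_self)).inv₀
          fun y hy => (hgpos y hy).ne')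
      · apply ContinuousOn.mul continuousOn_const
        have := intervalIntegral.continuousOn_primitive_interval
          (f := fun s => 1 / a s) (μ := MeasureTheory.volume) (a := x) (b := x₀) ?_
        · rw [uIcc_of_le hx.2.le] at this; exact this
        · rw [uIcc_of_le hx.2.le]
          exact (h1acont.mono hIccJ).integrableOn_compact isCompact_Icc
    · intro y hy
      rw [interior_Icc] at hy
      exact ⟨_, (hdF y hy).hasDerivWithinAt⟩
    · intro y hy
      rw [interior_Icc] at hy
      rw [(hdF y hy).deriv]
      have hyJ : y ∈ Ioo (-1 : ℝ) (-1 + δ) := hIccJ ⟨hy.1.le, hy.2.le⟩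
      have hgy : 0 < g y := hgpos y ⟨hy.1.le, hy.2.le⟩
      have hay : 0 < a y := hapos y hyJ
      have hkey := keyA y hyJ (keyB y ⟨hyJ.1, hy.2.le⟩)
      have he : -(g' y) / g y ^ 2 - (1 / 8) * (1 / a y) =
          (-(a y * g' y) - g y ^ 2 / 8) / (a y * g y ^ 2) := by
        field_simp
      rw [he]
      apply div_nonneg (by linarith) (by positivity)
  have hFle : F x ≤ F x₀ := hFmono ⟨le_refl _, hx.2.le⟩ ⟨hx.2.le, le_refl _⟩ hx.2.le
  have hFx : F x = (g x)⁻¹ := by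
    simp [hFdef, intervalIntegral.integral_same]
  have hsplit : (∫ s in x..x₀, 1 / a s) + K = ∫ s in x..(-1 + δ), 1 / a s :=
    intervalIntegral.integral_add_adjacent_intervals hIntxx₀ hIntx₀
  have hgxpos : 0 < g x := hgpos x ⟨le_refl _, hx.2.le⟩
  have h1 : (0 : ℝ) < (g x)⁻¹ := by positivity
  have h2 : (g x₀)⁻¹ = 1 / g x₀ := (one_div _).symm
  have h3 : 8 / g x₀ + 1 ≤ ∫ s in x..x₀, 1 / a s := by linarith
  have h4 : F x₀ = (g x₀)⁻¹ - (1 / 8) * ∫ s in x..x₀, 1 / a s := rfl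
  rw [hFx, h4] at hFle
  rw [h2] at hFle
  have : (1 / 8 : ℝ) * (8 / g x₀ + 1) ≤ (1 / 8) * ∫ s in x..x₀, 1 / a s :=
    mul_le_mul_of_nonneg_left h3 (by norm_num)
  have h5 : (1 / 8 : ℝ) * (8 / g x₀ + 1) = 1 / g x₀ + 1 / 8 := by ring
  linarith
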